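/- Let f_i, f_j, f_k be reals and η_{ij}, η_{ik}, η_{jk} > 0. Define cosh l_{rs} = -cosh(f_r - f_s) + η_{rs} e^{f_r + f_s}, assumed > 1 for all pairs {r,s} ⊂ {i,j,k}, and let θ_i = arccosh((cosh l_{jk} + cosh l_{ij} cosh l_{ik})/(sinh l_{ij} sinh l_{ik})). Then along any sequence with f_i → +∞ and f_j, f_k → +∞, one has θ_i → 0. -/

import Mathlib

open Real Filter

/-- `arcosh x = log (x + √(x² - 1))`, the inverse of `cosh` on `[0,∞)`. -/
noncomputable def arcosh (x : ℝ) : ℝ := Real.log (x + Real.sqrt (x ^ 2 - 1))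

lemma arcosh_exp {x : ℝ} (hx : 1 ≤ x) :
    Real.exp (_root_.arcosh x) = x + Real.sqrt (x ^ 2 - 1) ∧
    Real.exp (-(_root_.arcosh x)) = x - Real.sqrt (x ^ 2 - 1) := by
  have h1 : (0:ℝ) ≤ x ^ 2 - 1 := by nlinarith
  have hs : Real.sqrt (x ^ 2 - 1) ^ 2 = x ^ 2 - 1 := Real.sq_sqrt h1
  have hs0 : 0 ≤ Real.sqrt (x ^ 2 - 1) := Real.sqrt_nonneg _
  have hpos : 0 < x + Real.sqrt (x ^ 2 - 1) := by linarith
  have he : Real.exp (_root_.arcosh x) = x + Real.sqrt (x ^ 2 - 1) := Real.exp_log hpos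
  refine ⟨he, ?_⟩
  rw [Real.exp_neg, he]
  have hmul : (x - Real.sqrt (x ^ 2 - 1)) * (x + Real.sqrt (x ^ 2 - 1)) = 1 := by nlinarith
  exact inv_eq_of_mul_eq_one_left hmul

lemma cosh_arcosh {x : ℝ} (hx : 1 ≤ x) : Real.cosh (_root_.arcosh x) = x := by
  obtain ⟨h1, h2⟩ := arcosh_exp hx
  rw [Real.cosh_eq, h1, h2]; ring

lemma sinh_arcosh {x : ℝ} (hx : 1 ≤ x) :
    Real.sinh (_root_.arcosh x) = Real.sqrt (x ^ 2 - 1) := by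
  obtain ⟨h1, h2⟩ := arcosh_exp hx
  rw [Real.sinh_eq, h1, h2]; ring

/-- eventual lower bound for the cosh of edge length -/
lemma g_lower {η : ℝ} (hη : 0 < η) {f g : ℕ → ℝ}
    (hf : Tendsto f atTop atTop) (hg : Tendsto g atTop atTop) :
    ∀ᶠ n in atTop, (η/2) * Real.exp (f n + g n) ≤
      -Real.cosh (f n - g n) + η * Real.exp (f n + g n) := by
  set M : ℝ := -(Real.log (η/2)) / 2 with hMdef
  have hM : Real.exp (-(2*M)) = η/2 := by
    have h : -(2*M) = Real.log (η/2) := by rw [hMdef]; ring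
    rw [h, Real.exp_log (by linarith)]
  filter_upwards [hf.eventually_ge_atTop M, hg.eventually_ge_atTop M] with n h1 h2
  have hc : Real.cosh (f n - g n) ≤ (η/2) * Real.exp (f n + g n) := by
    rw [Real.cosh_eq]
    have e1 : Real.exp (f n - g n) ≤ Real.exp (-(2*M)) * Real.exp (f n + g n) := by
      rw [← Real.exp_add]; exact Real.exp_le_exp.2 (by linarith)
    have e2 : Real.exp (-(f n - g n)) ≤ Real.exp (-(2*M)) * Real.exp (f n + g n) := by
      rw [← Real.exp_add]; exact Real.exp_le_exp.2 (by linarith)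
    rw [hM] at e1 e2
    linarith
  linarith

/-- `G/√(G²-1) → 1` as `G → ∞` -/
lemma ratio_g_s {G : ℕ → ℝ} (hG : Tendsto G atTop atTop) :
    Tendsto (fun n => G n / Real.sqrt ((G n) ^ 2 - 1)) atTop (nhds 1) := by
  have h2 : Tendsto (fun n => (G n)^2) atTop atTop := (tendsto_pow_atTop (by norm_num : (2:ℕ) ≠ 0)).comp hG
  have hinv : Tendsto (fun n => 1 / (G n)^2) atTop (nhds 0) := by
    simp only [one_div]; exact h2.inv_tendsto_atTop
  have hone : Tendsto (fun n => 1 - 1 / (G n)^2) atTop (nhds 1) := by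
    simpa using (tendsto_const_nhds.sub hinv)
  have hsq : Tendsto (fun n => Real.sqrt (1 - 1 / (G n)^2)) atTop (nhds 1) := by
    have := (Real.continuous_sqrt.continuousAt (x := (1:ℝ))).tendsto.comp hone
    simpa [Function.comp_def] using this
  have hsg : Tendsto (fun n => Real.sqrt ((G n)^2 - 1) / G n) atTop (nhds 1) := by
    apply hsq.congr'
    filter_upwards [hG.eventually_ge_atTop 1] with n hn
    have hn0 : (0:ℝ) < G n := by linarith
    have hsub : (0:ℝ) ≤ (G n)^2 - 1 := by nlinarith
    have h : 1 - 1 / (G n)^2 = ((G n)^2 - 1) / (G n)^2 := by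
      field_simp
    rw [h, Real.sqrt_div hsub, Real.sqrt_sq hn0.le]
  have hfin := hsg.inv₀ (by norm_num)
  rw [inv_one] at hfin
  apply hfin.congr'
  filter_upwards with n
  rw [inv_div]

/-- For the discrete conformal structure (A3): if the discrete conformal factors
`fᵢ, fⱼ, fₖ` all tend to `+∞` (along a sequence, with the hexagon condition holding),
then the generalized angle `θᵢ` tends to `0`. -/
theorem angle_tendsto_zero_A3 (ηij ηik ηjk : ℝ)
    (hηij : 0 < ηij) (hηik : 0 < ηik) (hηjk : 0 < ηjk)
    (fi fj fk : ℕ → ℝ)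
    (hfi : Tendsto fi atTop atTop) (hfj : Tendsto fj atTop atTop)
    (hfk : Tendsto fk atTop atTop)
    (lij : ℕ → ℝ) (lik : ℕ → ℝ) (ljk : ℕ → ℝ)
    (hlij : ∀ n, lij n = _root_.arcosh (-Real.cosh (fi n - fj n) + ηij * Real.exp (fi n + fj n)))
    (hlik : ∀ n, lik n = _root_.arcosh (-Real.cosh (fi n - fk n) + ηik * Real.exp (fi n + fk n)))
    (hljk : ∀ n, ljk n = _root_.arcosh (-Real.cosh (fj n - fk n) + ηjk * Real.exp (fj n + fk n)))
    (hij : ∀ n, 1 < -Real.cosh (fi n - fj n) + ηij * Real.exp (fi n + fj n))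
    (hik : ∀ n, 1 < -Real.cosh (fi n - fk n) + ηik * Real.exp (fi n + fk n))
    (hjk : ∀ n, 1 < -Real.cosh (fj n - fk n) + ηjk * Real.exp (fj n + fk n))
    (θi : ℕ → ℝ)
    (hθi : ∀ n, θi n = _root_.arcosh ((Real.cosh (ljk n)
      + Real.cosh (lij n) * Real.cosh (lik n))
      / (Real.sinh (lij n) * Real.sinh (lik n)))) :
    Tendsto θi atTop (nhds 0) := by
  set Gij : ℕ → ℝ := fun n => -Real.cosh (fi n - fj n) + ηij * Real.exp (fi n + fj n) with hGij
  set Gik : ℕ → ℝ := fun n => -Real.cosh (fi n - fk n) + ηik * Real.exp (fi n + fk n) with hGik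
  set Gjk : ℕ → ℝ := fun n => -Real.cosh (fj n - fk n) + ηjk * Real.exp (fj n + fk n) with hGjk
  set Sij : ℕ → ℝ := fun n => Real.sqrt ((Gij n)^2 - 1) with hSij
  set Sik : ℕ → ℝ := fun n => Real.sqrt ((Gik n)^2 - 1) with hSik
  have hcoshij : ∀ n, Real.cosh (lij n) = Gij n := fun n => by
    rw [hlij n]; exact _root_.cosh_arcosh (hij n).le
  have hcoshik : ∀ n, Real.cosh (lik n) = Gik n := fun n => by
    rw [hlik n]; exact _root_.cosh_arcosh (hik n).le
  have hcoshjk : ∀ n, Real.cosh (ljk n) = Gjk n := fun n => by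
    rw [hljk n]; exact _root_.cosh_arcosh (hjk n).le
  have hsinhij : ∀ n, Real.sinh (lij n) = Sij n := fun n => by
    rw [hlij n]; exact _root_.sinh_arcosh (hij n).le
  have hsinhik : ∀ n, Real.sinh (lik n) = Sik n := fun n => by
    rw [hlik n]; exact _root_.sinh_arcosh (hik n).le
  have hij' : ∀ n, 1 < Gij n := fun n => hij n
  have hik' : ∀ n, 1 < Gik n := fun n => hik n
  have hjk' : ∀ n, 1 < Gjk n := fun n => hjk n
  have lbij := g_lower hηij hfi hfj
  have lbik := g_lower hηik hfi hfk
  have hexp : ∀ (f g : ℕ → ℝ), Tendsto f atTop atTop → Tendsto g atTop atTop →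
      Tendsto (fun n => Real.exp (f n + g n)) atTop atTop := fun f g hf hg =>
    Real.tendsto_exp_atTop.comp (hf.atTop_add_atTop hg)
  have hGijT : Tendsto Gij atTop atTop := by
    apply tendsto_atTop_mono' atTop lbij
    exact ((hexp fi fj hfi hfj).const_mul_atTop (by linarith))
  have hGikT : Tendsto Gik atTop atTop := by
    apply tendsto_atTop_mono' atTop lbik
    exact ((hexp fi fk hfi hfk).const_mul_atTop (by linarith))
  have hRij : Tendsto (fun n => Gij n / Sij n) atTop (nhds 1) := ratio_g_s hGijT
  have hRik : Tendsto (fun n => Gik n / Sik n) atTop (nhds 1) := ratio_g_s hGikT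
  -- Gjk / (Gij * Gik) → 0
  have hsmall : Tendsto (fun n => Gjk n / (Gij n * Gik n)) atTop (nhds 0) := by
    have hub : Tendsto (fun n => (4*ηjk/(ηij*ηik)) * Real.exp (-(2 * fi n)))
        atTop (nhds 0) := by
      have h0 : Tendsto (fun n => Real.exp (-(2 * fi n))) atTop (nhds 0) := by
        apply Real.tendsto_exp_atBot.comp
        apply tendsto_neg_atBot_iff.mpr
        exact hfi.const_mul_atTop (by norm_num)
      simpa using h0.const_mul (4*ηjk/(ηij*ηik))
    refine squeeze_zero' ?_ ?_ hub
    · filter_upwards with n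
      have h1 : (0:ℝ) < Gjk n := by linarith [hjk' n]
      have h2 : (0:ℝ) < Gij n := by linarith [hij' n]
      have h3 : (0:ℝ) < Gik n := by linarith [hik' n]
      positivity
    · filter_upwards [lbij, lbik] with n h1 h2
      have hjkub : Gjk n ≤ ηjk * Real.exp (fj n + fk n) := by
        have hcp := Real.cosh_pos (x := fj n - fk n)
        show -Real.cosh (fj n - fk n) + ηjk * Real.exp (fj n + fk n) ≤ _
        linarith
      have hjk0 : (0:ℝ) ≤ Gjk n := by linarith [hjk' n]
      have hd1 : (0:ℝ) < (ηij/2) * Real.exp (fi n + fj n) := by positivity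
      have hd2 : (0:ℝ) < (ηik/2) * Real.exp (fi n + fk n) := by positivity
      have hg1 : (0:ℝ) < Gij n := by linarith [hij' n]
      calc Gjk n / (Gij n * Gik n)
          ≤ (ηjk * Real.exp (fj n + fk n)) /
            (((ηij/2) * Real.exp (fi n + fj n)) * ((ηik/2) * Real.exp (fi n + fk n))) := by
            refine div_le_div₀ (by positivity) hjkub (by positivity) ?_
            exact mul_le_mul h1 h2 hd2.le hg1.le
          _ = (4*ηjk/(ηij*ηik)) * Real.exp (-(2 * fi n)) := by
            have ea : Real.exp (fi n + fj n) = Real.exp (fi n) * Real.exp (fj n) :=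
              Real.exp_add _ _
            have eb : Real.exp (fi n + fk n) = Real.exp (fi n) * Real.exp (fk n) :=
              Real.exp_add _ _
            have ec : Real.exp (fj n + fk n) = Real.exp (fj n) * Real.exp (fk n) :=
              Real.exp_add _ _
            have ed : Real.exp (-(2 * fi n)) = (Real.exp (fi n) * Real.exp (fi n))⁻¹ := by
              rw [← Real.exp_add, ← Real.exp_neg]; ring_nf
            rw [ea, eb, ec, ed]
            have p1 := Real.exp_pos (fi n)
            have p2 := Real.exp_pos (fj n)
            have p3 := Real.exp_pos (fk n)
            field_simp
            ring
  -- the argument of arcosh tends to 1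
  have hratio : Tendsto (fun n => (Gjk n + Gij n * Gik n) / (Sij n * Sik n))
      atTop (nhds 1) := by
    have hlim := ((hsmall.mul hRij).mul hRik).add (hRij.mul hRik)
    have hlim1 : Tendsto (fun n => Gjk n / (Gij n * Gik n) * (Gij n / Sij n) * (Gik n / Sik n)
        + (Gij n / Sij n) * (Gik n / Sik n)) atTop (nhds 1) := by
      simpa using hlim
    apply hlim1.congr
    intro n
    have hg1 : (0:ℝ) < Gij n := by linarith [hij' n]
    have hg2 : (0:ℝ) < Gik n := by linarith [hik' n]
    have hs1 : (0:ℝ) < Sij n := Real.sqrt_pos.2 (by nlinarith [hij' n])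
    have hs2 : (0:ℝ) < Sik n := Real.sqrt_pos.2 (by nlinarith [hik' n])
    field_simp
  -- conclude via continuity of x ↦ log (x + √(x²-1)) at x = 1
  have hsq : Tendsto (fun n => Real.sqrt
      (((Gjk n + Gij n * Gik n) / (Sij n * Sik n)) ^ 2 - 1)) atTop (nhds 0) := by
    have h0 : Tendsto (fun n => ((Gjk n + Gij n * Gik n) / (Sij n * Sik n)) ^ 2 - 1)
        atTop (nhds 0) := by
      have := (hratio.pow 2).sub (tendsto_const_nhds (x := (1:ℝ)))
      simpa using this
    have := (Real.continuous_sqrt.continuousAt (x := (0:ℝ))).tendsto.comp h0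
    simpa [Function.comp_def] using this
  have hsum : Tendsto (fun n => (Gjk n + Gij n * Gik n) / (Sij n * Sik n)
      + Real.sqrt (((Gjk n + Gij n * Gik n) / (Sij n * Sik n)) ^ 2 - 1))
      atTop (nhds 1) := by
    simpa using hratio.add hsq
  have hlog := hsum.log one_ne_zero
  rw [Real.log_one] at hlog
  apply hlog.congr
  intro n
  rw [hθi n, hcoshij n, hcoshik n, hcoshjk n, hsinhij n, hsinhik n]
  rfl
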